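/- Let λ ⊢ n lie in the hook H(k,l) (i.e., λ_{k+1} ≤ l), and let T_λ be a Young tableau of shape λ. Then there exists an element u·e_{T_λ} ∈ F[S_n]·e_{T_λ} and a partition of {1,…,n} into disjoint sets X₁,…,X_{k'}, Y₁,…,Y_{l'} with k' ≤ k, l' ≤ l, such that σ·(u e_{T_λ}) = u e_{T_λ} for every permutation σ of any set X_i, σ·(u e_{T_λ}) = (−1)^σ u e_{T_λ} for every permutation σ of any set Y_j, and F[S_n]·(u e_{T_λ}) = F[S_n]·e_{T_λ}; moreover k', l' and the cardinalities |X_i|, |Y_j| depend only on λ. -/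

import Mathlib

variable (F : Type*) [Field F] [CharZero F]

/-- The Young symmetrizer `e_{T_λ}` of the tableau with row function `row` and column
function `col`. -/
noncomputable def youngSym {n : ℕ} (row col : Fin n → ℕ) :
    MonoidAlgebra F (Equiv.Perm (Fin n)) :=
  ∑ σ : Equiv.Perm (Fin n), ∑ τ : Equiv.Perm (Fin n),
    if (∀ j, row (σ j) = row j) ∧ (∀ j, col (τ j) = col j) then
      (Equiv.Perm.sign τ : ℤ) • MonoidAlgebra.single (σ * τ) (1 : F)
    else 0

section Hook19
open MonoidAlgebra Finset Equiv
open scoped Classical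
noncomputable section
set_option linter.unusedSectionVars false

section Comb
variable {n : ℕ} {lam : ℕ → ℕ} {row col : Fin n → ℕ}

def colLen (n : ℕ) (lam : ℕ → ℕ) (c : ℕ) : ℕ :=
  ((Finset.range n).filter (fun r => c < lam r)).card

def ydiag (n : ℕ) (lam : ℕ → ℕ) : Finset (ℕ × ℕ) :=
  (Finset.range n ×ˢ Finset.range n).filter (fun p => p.2 < lam p.1)

lemma mem_ydiag {p : ℕ × ℕ} (hlam0 : lam 0 ≤ n) (hmono : Antitone lam) :
    p ∈ ydiag n lam ↔ p.1 < n ∧ p.2 < lam p.1 := by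
  unfold ydiag
  simp only [Finset.mem_filter, Finset.mem_product, Finset.mem_range]
  constructor
  · rintro ⟨⟨h1, _⟩, h3⟩; exact ⟨h1, h3⟩
  · rintro ⟨h1, h2⟩
    refine ⟨⟨h1, ?_⟩, h2⟩
    calc p.2 < lam p.1 := h2
      _ ≤ lam 0 := hmono (Nat.zero_le _)
      _ ≤ n := hlam0

lemma ydiag_card (hlam0 : lam 0 ≤ n) (hmono : Antitone lam)
    (hsum : ∑ i ∈ Finset.range n, lam i = n) : (ydiag n lam).card = n := by
  have hd : ydiag n lam = (Finset.range n).biUnion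
      (fun r => (Finset.range (lam r)).image (fun c => (r, c))) := by
    ext p
    rw [mem_ydiag hlam0 hmono]
    simp only [Finset.mem_biUnion, Finset.mem_image, Finset.mem_range]
    constructor
    · rintro ⟨h1, h2⟩; exact ⟨p.1, h1, p.2, h2, rfl⟩
    · rintro ⟨r, hr, c, hc, rfl⟩; exact ⟨hr, hc⟩
  rw [hd, Finset.card_biUnion]
  · calc ∑ r ∈ Finset.range n, ((Finset.range (lam r)).image (fun c => (r, c))).card
        = ∑ r ∈ Finset.range n, lam r := by
          refine Finset.sum_congr rfl fun r _ => ?_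
          rw [Finset.card_image_of_injective _ (fun a b h => by simpa using h),
            Finset.card_range]
      _ = n := hsum
  · intro r _ r' _ hrr'
    simp only [Finset.disjoint_left, Finset.mem_image, Finset.mem_range]
    rintro p ⟨c, _, rfl⟩ ⟨c', _, h⟩
    exact hrr' (congrArg Prod.fst h).symm

variable (row col) in
def boxMap : Fin n → ℕ × ℕ := fun j => (row j, col j)

section CaseA
variable (hmono : Antitone lam)
  (hsum : ∑ i ∈ Finset.range n, lam i = n) (hzero : lam n = 0)
  (hcol : ∀ j, col j < lam (row j))

include hmono hzero hcol in
lemma rowlt : ∀ j, row j < n := by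
  intro j
  by_contra h
  push_neg at h
  have h2 : lam (row j) ≤ lam n := hmono h
  have := hcol j
  omega

include hmono hsum hzero in
lemma lam_zero_le : lam 0 ≤ n := by
  rcases Nat.eq_zero_or_pos n with hn | hn
  · subst hn; omega
  · rw [← hsum]
    exact Finset.single_le_sum (f := lam) (fun i _ => Nat.zero_le _)
      (Finset.mem_range.mpr hn)

include hmono hsum hzero hcol in
lemma boxMap_mem_ydiag : ∀ j, boxMap row col j ∈ ydiag n lam := by
  intro j
  rw [mem_ydiag (lam_zero_le hmono hsum hzero) hmono]
  exact ⟨rowlt hmono hzero hcol j, hcol j⟩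

include hmono hsum hzero hcol in
lemma boxMap_image (hinj : Function.Injective (boxMap row col)) :
    Finset.univ.image (boxMap row col) = ydiag n lam := by
  apply Finset.eq_of_subset_of_card_le
  · intro p hp
    rcases Finset.mem_image.mp hp with ⟨j, _, rfl⟩
    exact boxMap_mem_ydiag hmono hsum hzero hcol j
  · rw [ydiag_card (lam_zero_le hmono hsum hzero) hmono hsum,
      Finset.card_image_of_injective _ hinj, Finset.card_univ, Fintype.card_fin]

include hmono hsum hzero hcol in
lemma fiber_count (hinj : Function.Injective (boxMap row col))
    (P : ℕ × ℕ → Prop) [DecidablePred P] (Q : Fin n → Prop) [DecidablePred Q]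
    (hPQ : ∀ j, Q j ↔ P (boxMap row col j)) :
    (Finset.univ.filter Q).card = ((ydiag n lam).filter P).card := by
  have h1 : Finset.univ.filter Q = Finset.univ.filter (fun j => P (boxMap row col j)) :=
    Finset.filter_congr (fun j _ => by rw [hPQ])
  rw [h1, ← boxMap_image hmono hsum hzero hcol hinj, Finset.filter_image,
    Finset.card_image_of_injective _ hinj]

include hmono hsum hzero hcol in
lemma row_fiber_card (hinj : Function.Injective (boxMap row col)) (r : ℕ) :
    (Finset.univ.filter (fun j => row j = r)).card = lam r := by
  rcases Nat.lt_or_ge r n with hr | hr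
  · rw [fiber_count hmono hsum hzero hcol hinj (fun p => p.1 = r) (fun j => row j = r) (fun j => Iff.rfl)]
    have h2 : (ydiag n lam).filter (fun p => p.1 = r) =
        (Finset.range (lam r)).image (fun c => (r, c)) := by
      ext p
      rw [Finset.mem_filter, mem_ydiag (lam_zero_le hmono hsum hzero) hmono]
      simp only [Finset.mem_image, Finset.mem_range]
      constructor
      · rintro ⟨⟨_, h3⟩, h4⟩
        exact ⟨p.2, h4 ▸ h3, by rw [← h4]⟩
      · rintro ⟨c, hc, rfl⟩
        exact ⟨⟨hr, hc⟩, rfl⟩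
    rw [h2, Finset.card_image_of_injective _ (fun a b h => by simpa using h),
      Finset.card_range]
  · have h1 : (Finset.univ.filter (fun j : Fin n => row j = r)) = ∅ := by
      rw [Finset.filter_eq_empty_iff]
      intro j _
      have := rowlt hmono hzero hcol j
      omega
    have h2 : lam r = 0 := by
      have := hmono hr
      omega
    rw [h1, h2, Finset.card_empty]

include hmono hsum hzero hcol in
lemma col_fiber_card (hinj : Function.Injective (boxMap row col)) (c : ℕ) :
    (Finset.univ.filter (fun j => col j = c)).card = colLen n lam c := by
  rw [fiber_count hmono hsum hzero hcol hinj (fun p => p.2 = c) (fun j => col j = c) (fun j => Iff.rfl)]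
  have h2 : (ydiag n lam).filter (fun p => p.2 = c) =
      ((Finset.range n).filter (fun r => c < lam r)).image (fun r => (r, c)) := by
    ext p
    rw [Finset.mem_filter, mem_ydiag (lam_zero_le hmono hsum hzero) hmono]
    simp only [Finset.mem_image, Finset.mem_filter, Finset.mem_range]
    constructor
    · rintro ⟨⟨h3, h4⟩, h5⟩
      exact ⟨p.1, ⟨h3, h5 ▸ h4⟩, by rw [← h5]⟩
    · rintro ⟨r, ⟨hrn, hc2⟩, rfl⟩
      exact ⟨⟨hrn, hc2⟩, rfl⟩
  rw [h2, Finset.card_image_of_injective _ (fun a b h => by simpa using h)]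
  rfl

include hmono hsum hzero hcol in
lemma trunc_fiber_card (hinj : Function.Injective (boxMap row col)) (k c : ℕ) :
    (Finset.univ.filter (fun j => col j = c ∧ k ≤ row j)).card =
      ((Finset.range n).filter (fun r => k ≤ r ∧ c < lam r)).card := by
  rw [fiber_count hmono hsum hzero hcol hinj (fun p => p.2 = c ∧ k ≤ p.1)
    (fun j => col j = c ∧ k ≤ row j) (fun j => Iff.rfl)]
  have h2 : (ydiag n lam).filter (fun p => p.2 = c ∧ k ≤ p.1) =
      ((Finset.range n).filter (fun r => k ≤ r ∧ c < lam r)).image (fun r => (r, c)) := by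
    ext p
    rw [Finset.mem_filter, mem_ydiag (lam_zero_le hmono hsum hzero) hmono]
    simp only [Finset.mem_image, Finset.mem_filter, Finset.mem_range]
    constructor
    · rintro ⟨⟨h3, h4⟩, h5, h6⟩
      exact ⟨p.1, ⟨h3, h6, h5 ▸ h4⟩, by rw [← h5]⟩
    · rintro ⟨r, ⟨hrn, hk, hc2⟩, rfl⟩
      exact ⟨⟨hrn, hc2⟩, rfl, hk⟩
  rw [h2, Finset.card_image_of_injective _ (fun a b h => by simpa using h)]

include hmono hsum hzero hcol in
lemma key_counting (hinj : Function.Injective (boxMap row col))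
    (π : Equiv.Perm (Fin n))
    (H : Function.Injective (fun j : Fin n => (row (π j), col j))) :
    ∀ j, row (π j) < n ∧ col j < lam (row (π j)) := by
  intro j0
  set c := col j0 with hcdef
  have hcn : c < n := by
    have hcj := hcol j0
    have := lam_zero_le hmono hsum hzero
    have := hmono (Nat.zero_le (row j0))
    omega
  set Sset := (Finset.range n).filter (fun r => c < lam r) with hS
  set g : ℕ → ℕ := fun c' =>
    (Finset.univ.filter (fun j : Fin n => row (π j) ∈ Sset ∧ col j = c')).card with hg
  have hcoln : ∀ j : Fin n, col j < n := by
    intro j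
    have hcj := hcol j
    have := lam_zero_le hmono hsum hzero
    have := hmono (Nat.zero_le (row j))
    omega
  have hle : ∀ c' ∈ Finset.range n, g c' ≤ colLen n lam (max c c') := by
    intro c' _
    have b1 : g c' ≤ colLen n lam c' := by
      rw [← col_fiber_card hmono hsum hzero hcol hinj c']
      apply Finset.card_le_card
      intro j hj
      rw [Finset.mem_filter] at hj ⊢
      exact ⟨hj.1, hj.2.2⟩
    have b2 : g c' ≤ colLen n lam c := by
      rw [show colLen n lam c = Sset.card from rfl]
      apply Finset.card_le_card_of_injOn (fun j => row (π j))
      · intro j hj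
        rw [Finset.mem_coe, Finset.mem_filter] at hj
        exact hj.2.1
      · intro x hx y hy hxy
        rw [Finset.mem_coe, Finset.mem_filter] at hx hy
        have heq : (fun j : Fin n => (row (π j), col j)) x =
            (fun j : Fin n => (row (π j), col j)) y := by
          simp only [Prod.mk.injEq]
          exact ⟨hxy, hx.2.2.trans hy.2.2.symm⟩
        exact H heq
    have hmax : colLen n lam (max c c') ≤ colLen n lam c ∧
        colLen n lam (max c c') ≤ colLen n lam c' := by
      constructor <;>
      · apply Finset.card_le_card
        intro r hr
        rw [Finset.mem_filter] at hr ⊢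
        refine ⟨hr.1, lt_of_le_of_lt ?_ hr.2⟩
        omega
    -- we need colLen (max) = min; prove ≥ too
    have hmin : min (colLen n lam c) (colLen n lam c') ≤ colLen n lam (max c c') := by
      rcases le_total c c' with h | h
      · rw [max_eq_right h]
        exact le_trans (min_le_right _ _) (le_refl _)
      · rw [max_eq_left h]
        exact le_trans (min_le_left _ _) (le_refl _)
    omega
  have hsum1 : ∑ c' ∈ Finset.range n, g c' = ∑ r ∈ Sset, lam r := by
    have s1 : (Finset.univ.filter (fun j : Fin n => row (π j) ∈ Sset)).card =
        ∑ c' ∈ Finset.range n, g c' := by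
      rw [Finset.card_eq_sum_card_fiberwise (f := col) (t := Finset.range n)
        (fun j _ => Finset.mem_range.mpr (hcoln j))]
      refine Finset.sum_congr rfl fun c' _ => congrArg Finset.card ?_
      rw [Finset.filter_filter]
    have s2 : (Finset.univ.filter (fun j : Fin n => row (π j) ∈ Sset)).card =
        (Finset.univ.filter (fun i : Fin n => row i ∈ Sset)).card := by
      apply Finset.card_bij (fun j _ => π j)
      · intro a ha
        rw [Finset.mem_filter] at ha ⊢
        exact ⟨Finset.mem_univ _, ha.2⟩
      · intro a _ b _ hab
        exact π.injective hab
      · intro b hb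
        rw [Finset.mem_filter] at hb
        refine ⟨π⁻¹ b, ?_, by simp⟩
        rw [Finset.mem_filter]
        simpa using hb.2
    have s3 : (Finset.univ.filter (fun i : Fin n => row i ∈ Sset)).card =
        ∑ r ∈ Sset, lam r := by
      rw [Finset.card_eq_sum_card_fiberwise (f := row) (t := Sset)
        (s := Finset.univ.filter (fun i : Fin n => row i ∈ Sset))
        (fun j hj => (Finset.mem_filter.mp hj).2)]
      refine Finset.sum_congr rfl fun r hr => ?_
      rw [Finset.filter_filter]
      rw [← row_fiber_card hmono hsum hzero hcol hinj r]
      congr 1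
      apply Finset.filter_congr
      intro j _
      constructor
      · rintro ⟨_, h⟩; exact h
      · rintro h; exact ⟨h ▸ hr, h⟩
    omega
  have hsum2 : ∑ c' ∈ Finset.range n, colLen n lam (max c c') = ∑ r ∈ Sset, lam r := by
    have t1 : ∀ r ∈ Sset, lam r = ((Finset.range n).filter (fun c' => c' < lam r)).card := by
      intro r hr
      have hrn : lam r ≤ n := le_trans (hmono (Nat.zero_le r)) (lam_zero_le hmono hsum hzero)
      have : (Finset.range n).filter (fun c' => c' < lam r) = Finset.range (lam r) := by
        ext c'
        simp only [Finset.mem_filter, Finset.mem_range]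
        omega
      rw [this, Finset.card_range]
    rw [Finset.sum_congr rfl t1]
    have t2 : ∀ r ∈ Sset, ((Finset.range n).filter (fun c' => c' < lam r)).card =
        ∑ c' ∈ Finset.range n, if c' < lam r then 1 else 0 := by
      intro r _
      rw [Finset.card_filter]
    rw [Finset.sum_congr rfl t2, Finset.sum_comm]
    refine Finset.sum_congr rfl fun c' _ => ?_
    rw [← Finset.card_filter]
    have : Sset.filter (fun r => c' < lam r) =
        (Finset.range n).filter (fun r => max c c' < lam r) := by
      rw [hS, Finset.filter_filter]
      apply Finset.filter_congr
      intro r _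
      omega
    rw [this]
    rfl
  have heq : ∀ c' ∈ Finset.range n, g c' = colLen n lam (max c c') :=
    (Finset.sum_eq_sum_iff_of_le hle).mp (by omega)
  have hgc : g c = colLen n lam c := by
    have := heq c (Finset.mem_range.mpr hcn)
    simpa using this
  -- now conclude
  have hsub : Finset.univ.filter (fun j : Fin n => row (π j) ∈ Sset ∧ col j = c) =
      Finset.univ.filter (fun j : Fin n => col j = c) := by
    apply Finset.eq_of_subset_of_card_le
    · intro j hj
      rw [Finset.mem_filter] at hj ⊢
      exact ⟨hj.1, hj.2.2⟩
    · rw [col_fiber_card hmono hsum hzero hcol hinj c]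
      rw [show (Finset.univ.filter (fun j : Fin n => row (π j) ∈ Sset ∧ col j = c)).card
        = g c from rfl, hgc]
  have hj0 : row (π j0) ∈ Sset := by
    have : j0 ∈ Finset.univ.filter (fun j : Fin n => col j = c) :=
      Finset.mem_filter.mpr ⟨Finset.mem_univ _, rfl⟩
    rw [← hsub, Finset.mem_filter] at this
    exact this.2.1
  rw [hS, Finset.mem_filter, Finset.mem_range] at hj0
  exact ⟨hj0.1, hj0.2⟩

end CaseA

lemma dichotomy_raw (hmono : Antitone lam)
    (hsum : ∑ i ∈ Finset.range n, lam i = n)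
    (hcol : ∀ j, col j < lam (row j))
    (hinj : Function.Injective (boxMap row col)) (π : Equiv.Perm (Fin n)) :
    (∃ ρ τ : Equiv.Perm (Fin n), (∀ x, row (ρ x) = row x) ∧ (∀ x, col (τ x) = col x) ∧
      π = ρ * τ) ∨
    ∃ i j : Fin n, i ≠ j ∧ row i = row j ∧ col (π⁻¹ i) = col (π⁻¹ j) := by
  by_cases hex : ∃ i j : Fin n, i ≠ j ∧ row i = row j ∧ col (π⁻¹ i) = col (π⁻¹ j)
  · right; exact hex
  left
  push_neg at hex
  have H : Function.Injective (fun j : Fin n => (row (π j), col j)) := by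
    intro a b hab
    simp only [Prod.mk.injEq] at hab
    by_contra hne
    have hne2 : π a ≠ π b := fun h => hne (π.injective h)
    refine hex (π a) (π b) hne2 hab.1 ?_
    show col ((π⁻¹ * π) a) = col ((π⁻¹ * π) b); rw [inv_mul_cancel]
    exact hab.2
  rcases Nat.eq_zero_or_pos n with hn | hn
  · refine ⟨1, 1, fun x => ?_, fun x => ?_, ?_⟩
    · exact absurd x.2 (by omega)
    · exact absurd x.2 (by omega)
    · subst hn
      exact Subsingleton.elim _ _
  by_cases hzero : lam n = 0
  · -- case A
    have hkey := key_counting hmono hsum hzero hcol hinj π H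
    set ψ2 : Fin n → ℕ × ℕ := fun j => (row (π j), col j) with hψ2
    have hsub2 : ∀ j, ψ2 j ∈ ydiag n lam := by
      intro j
      rw [mem_ydiag (lam_zero_le hmono hsum hzero) hmono]
      exact hkey j
    have hmem : ∀ j, ∃ j' : Fin n, boxMap row col j' = ψ2 j := by
      intro j
      have himg2 : Finset.univ.image ψ2 = ydiag n lam := by
        apply Finset.eq_of_subset_of_card_le
        · intro p hp
          rcases Finset.mem_image.mp hp with ⟨j', _, rfl⟩
          exact hsub2 j'
        · rw [ydiag_card (lam_zero_le hmono hsum hzero) hmono hsum,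
            Finset.card_image_of_injective _ H, Finset.card_univ, Fintype.card_fin]
      have : ψ2 j ∈ Finset.univ.image (boxMap row col) := by
        rw [boxMap_image hmono hsum hzero hcol hinj, ← himg2]
        exact Finset.mem_image_of_mem _ (Finset.mem_univ j)
      rcases Finset.mem_image.mp this with ⟨j', _, hj'⟩
      exact ⟨j', hj'⟩
    choose m hm using hmem
    have hminj : Function.Injective m := by
      intro a b hab
      apply H
      show ψ2 a = ψ2 b
      rw [← hm a, ← hm b, hab]
    let mp : Equiv.Perm (Fin n) := Equiv.ofBijective m
      (Finite.injective_iff_bijective.mp hminj)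
    have hmp : ∀ x, mp x = m x := fun x => rfl
    have hrowm : ∀ x, row (m x) = row (π x) := by
      intro x
      have := congrArg Prod.fst (hm x)
      exact this
    have hcolm : ∀ x, col (m x) = col x := by
      intro x
      have := congrArg Prod.snd (hm x)
      exact this
    refine ⟨π * mp⁻¹, mp, fun x => ?_, fun x => ?_, by group⟩
    · show row (π (mp⁻¹ x)) = row x
      rw [← hrowm (mp⁻¹ x)]
      have h7 : m (mp⁻¹ x) = x := by
        rw [← hmp (mp⁻¹ x)]
        exact mp.apply_symm_apply x
      rw [h7]
    · rw [hmp x]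
      exact hcolm x
  · -- case B
    have h1 : ∀ i ∈ Finset.range n, (fun _ => 1 : ℕ → ℕ) i ≤ lam i := by
      intro i hi
      have : lam i ≥ lam n := hmono (le_of_lt (Finset.mem_range.mp hi))
      show 1 ≤ lam i
      omega
    have hall : ∀ i ∈ Finset.range n, (1:ℕ) = lam i := by
      have hs : ∑ i ∈ Finset.range n, (fun _ => 1 : ℕ → ℕ) i =
          ∑ i ∈ Finset.range n, lam i := by
        rw [hsum]
        simp
      exact fun i hi => (Finset.sum_eq_sum_iff_of_le h1).mp hs i hi
    have hlam0 : lam 0 = 1 := ((hall 0 (Finset.mem_range.mpr hn))).symm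
    have hcol0 : ∀ j, col j = 0 := by
      intro j
      have h2 := hcol j
      have h3 : lam (row j) ≤ lam 0 := hmono (Nat.zero_le _)
      rw [hlam0] at h3
      omega
    refine ⟨1, π, fun x => by simp, fun x => by rw [hcol0, hcol0], by group⟩

end Comb


section LamOne
variable {n : ℕ} {lam : ℕ → ℕ} {row col : Fin n → ℕ}

lemma lam_all_one (hmono : Antitone lam)
    (hsum : ∑ i ∈ Finset.range n, lam i = n) (hzero : lam n ≠ 0) :
    ∀ i ∈ Finset.range n, (1:ℕ) = lam i := by
  have h1 : ∀ i ∈ Finset.range n, (fun _ => 1 : ℕ → ℕ) i ≤ lam i := by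
    intro i hi
    have : lam i ≥ lam n := hmono (le_of_lt (Finset.mem_range.mp hi))
    show 1 ≤ lam i
    omega
  have hs : ∑ i ∈ Finset.range n, (fun _ => 1 : ℕ → ℕ) i =
      ∑ i ∈ Finset.range n, lam i := by
    rw [hsum]; simp
  exact fun i hi => (Finset.sum_eq_sum_iff_of_le h1).mp hs i hi

lemma col_eq_zero_of_lam_pos (hmono : Antitone lam)
    (hsum : ∑ i ∈ Finset.range n, lam i = n) (hzero : lam n ≠ 0)
    (hcol : ∀ j, col j < lam (row j)) : ∀ j, col j = 0 := by
  intro j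
  have hn : 0 < n := lt_of_le_of_lt (Nat.zero_le _) j.2
  have hlam0 : lam 0 = 1 := (lam_all_one hmono hsum hzero 0 (Finset.mem_range.mpr hn)).symm
  have h2 := hcol j
  have h3 : lam (row j) ≤ lam 0 := hmono (Nat.zero_le _)
  rw [hlam0] at h3
  omega

end LamOne

section Core
variable {n : ℕ}

def presGrp (f : Fin n → ℕ) : Subgroup (Equiv.Perm (Fin n)) where
  carrier := {σ | ∀ j, f (σ j) = f j}
  one_mem' := by intro j; simp
  mul_mem' := by intro σ τ hσ hτ j; rw [Equiv.Perm.mul_apply, hσ, hτ]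
  inv_mem' := by
    intro σ hσ j
    have := hσ (σ⁻¹ j); simpa using this.symm

lemma mem_presGrp {f : Fin n → ℕ} {σ : Equiv.Perm (Fin n)} :
    σ ∈ presGrp f ↔ ∀ j, f (σ j) = f j := Iff.rfl

noncomputable def symSum (S : Subgroup (Equiv.Perm (Fin n))) :
    MonoidAlgebra F (Equiv.Perm (Fin n)) :=
  ∑ σ : S, MonoidAlgebra.single (σ : Equiv.Perm (Fin n)) (1 : F)

noncomputable def altSum (S : Subgroup (Equiv.Perm (Fin n))) :
    MonoidAlgebra F (Equiv.Perm (Fin n)) :=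
  ∑ σ : S, (Equiv.Perm.sign (σ : Equiv.Perm (Fin n)) : ℤ) •
    MonoidAlgebra.single (σ : Equiv.Perm (Fin n)) (1 : F)

variable {F}

lemma single_mul_symSum {S : Subgroup (Equiv.Perm (Fin n))} {ρ : Equiv.Perm (Fin n)}
    (hρ : ρ ∈ S) : MonoidAlgebra.single ρ (1:F) * symSum F S = symSum F S := by
  rw [symSum, Finset.mul_sum]
  rw [← Equiv.sum_comp (Equiv.mulLeft (⟨ρ, hρ⟩ : S))
    (fun σ : S => MonoidAlgebra.single (σ : Equiv.Perm (Fin n)) (1:F))]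
  refine Finset.sum_congr rfl fun σ _ => ?_
  simp [MonoidAlgebra.single_mul_single]

lemma symSum_mul_single {S : Subgroup (Equiv.Perm (Fin n))} {ρ : Equiv.Perm (Fin n)}
    (hρ : ρ ∈ S) : symSum F S * MonoidAlgebra.single ρ (1:F) = symSum F S := by
  rw [symSum, Finset.sum_mul]
  rw [← Equiv.sum_comp (Equiv.mulRight (⟨ρ, hρ⟩ : S))
    (fun σ : S => MonoidAlgebra.single (σ : Equiv.Perm (Fin n)) (1:F))]
  refine Finset.sum_congr rfl fun σ _ => ?_
  simp [MonoidAlgebra.single_mul_single]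

lemma single_mul_altSum {S : Subgroup (Equiv.Perm (Fin n))} {τ : Equiv.Perm (Fin n)}
    (hτ : τ ∈ S) : MonoidAlgebra.single τ (1:F) * altSum F S =
      (Equiv.Perm.sign τ : ℤ) • altSum F S := by
  rw [altSum, Finset.mul_sum, Finset.smul_sum]
  refine Fintype.sum_equiv (Equiv.mulLeft (⟨τ, hτ⟩ : S)) _ _ (fun σ => ?_)
  simp only [Equiv.coe_mulLeft, Subgroup.coe_mul, mul_smul_comm,
    MonoidAlgebra.single_mul_single, one_mul, Equiv.Perm.sign_mul, smul_smul]
  congr 1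
  push_cast
  rcases Int.units_eq_one_or (Equiv.Perm.sign τ) with h | h <;> simp [h]

lemma altSum_mul_single {S : Subgroup (Equiv.Perm (Fin n))} {τ : Equiv.Perm (Fin n)}
    (hτ : τ ∈ S) : altSum F S * MonoidAlgebra.single τ (1:F) =
      (Equiv.Perm.sign τ : ℤ) • altSum F S := by
  rw [altSum, Finset.sum_mul, Finset.smul_sum]
  refine Fintype.sum_equiv (Equiv.mulRight (⟨τ, hτ⟩ : S)) _ _ (fun σ => ?_)
  simp only [Equiv.coe_mulRight, Subgroup.coe_mul, smul_mul_assoc,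
    MonoidAlgebra.single_mul_single, mul_one, Equiv.Perm.sign_mul, smul_smul]
  congr 1
  push_cast
  rcases Int.units_eq_one_or (Equiv.Perm.sign τ) with h | h <;> simp [h]


lemma youngSym_eq (row col : Fin n → ℕ) :
    youngSym F row col = symSum F (presGrp row) * altSum F (presGrp col) := by
  rw [youngSym, symSum, altSum, Finset.sum_mul_sum]
  rw [← Finset.sum_subtype (Finset.univ.filter (fun σ => σ ∈ presGrp row))
    (p := fun σ => σ ∈ presGrp row) (fun x => by simp)
    (fun σ => ∑ τ : presGrp col,
      MonoidAlgebra.single (σ : Equiv.Perm (Fin n)) (1:F) *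
        ((Equiv.Perm.sign (τ : Equiv.Perm (Fin n)) : ℤ) •
          MonoidAlgebra.single (τ : Equiv.Perm (Fin n)) (1:F)))]
  rw [Finset.sum_filter]
  refine Finset.sum_congr rfl fun σ _ => ?_
  by_cases hσ : σ ∈ presGrp row
  · rw [if_pos hσ]
    rw [← Finset.sum_subtype (Finset.univ.filter (fun τ => τ ∈ presGrp col))
      (p := fun τ => τ ∈ presGrp col) (fun x => by simp)
      (fun τ => MonoidAlgebra.single σ (1:F) *
        ((Equiv.Perm.sign (τ : Equiv.Perm (Fin n)) : ℤ) •
          MonoidAlgebra.single (τ : Equiv.Perm (Fin n)) (1:F)))]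
    rw [Finset.sum_filter]
    refine Finset.sum_congr rfl fun τ _ => ?_
    by_cases hτ : τ ∈ presGrp col
    · rw [if_pos hτ, if_pos ⟨hσ, hτ⟩, mul_smul_comm, MonoidAlgebra.single_mul_single, one_mul]
    · rw [if_neg hτ, if_neg (fun h => hτ h.2)]
  · rw [if_neg hσ]
    refine Finset.sum_eq_zero fun τ _ => ?_
    rw [if_neg (fun h => hσ h.1)]

variable (F) in
lemma youngSym_apply_one (row col : Fin n → ℕ)
    (hinj : Function.Injective fun j : Fin n => (row j, col j)) :
    (youngSym F row col).coeff 1 = 1 := by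
  have triv : ∀ σ : Equiv.Perm (Fin n), σ ∈ presGrp row → σ ∈ presGrp col → σ = 1 := by
    intro σ hr hc
    refine Equiv.ext fun j => ?_
    have : (fun j : Fin n => (row j, col j)) (σ j) = (fun j : Fin n => (row j, col j)) j := by
      simp only [Prod.mk.injEq]
      exact ⟨hr j, hc j⟩
    simpa using hinj this
  rw [youngSym]
  rw [MonoidAlgebra.coeff_sum, Finset.sum_apply']
  rw [Finset.sum_eq_single (1 : Equiv.Perm (Fin n))]
  · rw [MonoidAlgebra.coeff_sum, Finset.sum_apply']
    rw [Finset.sum_eq_single (1 : Equiv.Perm (Fin n))]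
    · simp [Subgroup.one_mem, MonoidAlgebra.coeff_single_apply]
    · intro τ _ hτ
      by_cases hc : (∀ j, row ((1 : Equiv.Perm (Fin n)) j) = row j) ∧ (∀ j, col (τ j) = col j)
      · rw [if_pos hc]
        have h1 : (1 : Equiv.Perm (Fin n)) * τ ≠ 1 := by simpa using hτ
        rw [MonoidAlgebra.coeff_smul, Finsupp.smul_apply, MonoidAlgebra.coeff_single, Finsupp.single_apply, if_neg h1, smul_zero]
      · rw [if_neg hc]; rfl
    · intro h; exact absurd (Finset.mem_univ _) h
  · intro σ _ hσ
    rw [MonoidAlgebra.coeff_sum, Finset.sum_apply']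
    refine Finset.sum_eq_zero fun τ _ => ?_
    by_cases hc : (∀ j, row (σ j) = row j) ∧ (∀ j, col (τ j) = col j)
    · rw [if_pos hc]
      have hne : σ * τ ≠ 1 := by
        intro h
        have hτ : τ = σ⁻¹ := eq_inv_of_mul_eq_one_right h
        apply hσ
        have : σ⁻¹ ∈ presGrp col := hτ ▸ hc.2
        have : σ⁻¹ = 1 := triv _ ((presGrp row).inv_mem hc.1) this
        simpa using congrArg (·⁻¹) this
      rw [MonoidAlgebra.coeff_smul, Finsupp.smul_apply, MonoidAlgebra.coeff_single, Finsupp.single_apply, if_neg hne, smul_zero]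
    · rw [if_neg hc]; rfl
  · intro h; exact absurd (Finset.mem_univ _) h


/-- dichotomy hypothesis -/
def Dich (row col : Fin n → ℕ) : Prop :=
  ∀ π : Equiv.Perm (Fin n),
    (∃ ρ ∈ presGrp row, ∃ τ ∈ presGrp col, π = ρ * τ) ∨
    (∃ i j : Fin n, i ≠ j ∧ row i = row j ∧ col (π⁻¹ i) = col (π⁻¹ j))

lemma axb_mem_span {row col : Fin n → ℕ} (hd : Dich row col)
    (x : MonoidAlgebra F (Equiv.Perm (Fin n))) :
    symSum F (presGrp row) * x * altSum F (presGrp col) ∈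
      Submodule.span F {youngSym F row col} := by
  have key : ∀ π : Equiv.Perm (Fin n),
      symSum F (presGrp row) * MonoidAlgebra.single π (1:F) * altSum F (presGrp col) ∈
        Submodule.span F {youngSym F row col} := by
    intro π
    rcases hd π with ⟨ρ, hρ, τ, hτ, rfl⟩ | ⟨i, j, hij, hr, hc⟩
    · have hsp : MonoidAlgebra.single (ρ * τ) (1:F) =
          MonoidAlgebra.single ρ (1:F) * MonoidAlgebra.single τ (1:F) := by
        rw [MonoidAlgebra.single_mul_single, one_mul]
      have e1 : symSum F (presGrp row) * MonoidAlgebra.single (ρ * τ) (1:F) *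
          altSum F (presGrp col) =
          (Equiv.Perm.sign τ : ℤ) • youngSym F row col := by
        calc symSum F (presGrp row) * MonoidAlgebra.single (ρ * τ) (1:F) *
              altSum F (presGrp col)
            = (symSum F (presGrp row) * MonoidAlgebra.single ρ (1:F)) *
              (MonoidAlgebra.single τ (1:F) * altSum F (presGrp col)) := by
              rw [hsp]; noncomm_ring
          _ = symSum F (presGrp row) * ((Equiv.Perm.sign τ : ℤ) • altSum F (presGrp col)) := by
              rw [symSum_mul_single hρ, single_mul_altSum hτ]
          _ = (Equiv.Perm.sign τ : ℤ) • (symSum F (presGrp row) * altSum F (presGrp col)) :=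
              mul_smul_comm _ _ _
          _ = (Equiv.Perm.sign τ : ℤ) • youngSym F row col := by rw [youngSym_eq]
      rw [e1, ← Int.cast_smul_eq_zsmul F]
      exact Submodule.smul_mem _ _ (Submodule.mem_span_singleton_self _)
    · set t : Equiv.Perm (Fin n) := Equiv.swap i j with ht
      have htR : t ∈ presGrp row := by
        intro x
        rcases eq_or_ne x i with rfl | hxi
        · rw [ht]; rw [Equiv.swap_apply_left]; exact hr.symm
        rcases eq_or_ne x j with rfl | hxj
        · rw [ht]; rw [Equiv.swap_apply_right]; exact hr
        · rw [ht, Equiv.swap_apply_of_ne_of_ne hxi hxj]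
      have htC : π⁻¹ * t * π ∈ presGrp col := by
        have hsw : π⁻¹ * t * π = Equiv.swap (π⁻¹ i) (π⁻¹ j) := by
          rw [ht, Equiv.swap_apply_apply]
          group
        rw [hsw]
        intro x
        rcases eq_or_ne x (π⁻¹ i) with rfl | hxi
        · rw [Equiv.swap_apply_left]; exact hc.symm
        rcases eq_or_ne x (π⁻¹ j) with rfl | hxj
        · rw [Equiv.swap_apply_right]; exact hc
        · rw [Equiv.swap_apply_of_ne_of_ne hxi hxj]
      have hsgn : Equiv.Perm.sign (π⁻¹ * t * π) = -1 := by
        simp [ht, Equiv.Perm.sign_swap hij, mul_comm]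
      have hkey : MonoidAlgebra.single t (1:F) * MonoidAlgebra.single π (1:F) *
          MonoidAlgebra.single (π⁻¹ * t * π) (1:F) = MonoidAlgebra.single π (1:F) := by
        rw [MonoidAlgebra.single_mul_single, MonoidAlgebra.single_mul_single]
        congr 1
        · have : t * π * (π⁻¹ * t * π) = t * t * π := by group
          rw [this, ht, Equiv.swap_mul_self, one_mul]
        · norm_num
      have hzero : symSum F (presGrp row) * MonoidAlgebra.single π (1:F) *
          altSum F (presGrp col) = 0 := by
        have heq : symSum F (presGrp row) * MonoidAlgebra.single π (1:F) *
            altSum F (presGrp col) =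
            -(symSum F (presGrp row) * MonoidAlgebra.single π (1:F) *
              altSum F (presGrp col)) := by
          conv_lhs => rw [← hkey]
          calc symSum F (presGrp row) *
                (MonoidAlgebra.single t (1:F) * MonoidAlgebra.single π (1:F) *
                  MonoidAlgebra.single (π⁻¹ * t * π) (1:F)) * altSum F (presGrp col)
              = (symSum F (presGrp row) * MonoidAlgebra.single t (1:F)) *
                MonoidAlgebra.single π (1:F) *
                (MonoidAlgebra.single (π⁻¹ * t * π) (1:F) * altSum F (presGrp col)) := by
                noncomm_ring
            _ = symSum F (presGrp row) * MonoidAlgebra.single π (1:F) *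
                ((Equiv.Perm.sign (π⁻¹ * t * π) : ℤ) • altSum F (presGrp col)) := by
                rw [symSum_mul_single htR, single_mul_altSum htC]
            _ = -(symSum F (presGrp row) * MonoidAlgebra.single π (1:F) *
                altSum F (presGrp col)) := by
                rw [hsgn, Units.val_neg, Units.val_one, neg_smul, one_smul, mul_neg]
        have h2 : (2:F) • (symSum F (presGrp row) * MonoidAlgebra.single π (1:F) *
            altSum F (presGrp col)) = 0 := by
          rw [two_smul]
          nth_rewrite 1 [heq]
          rw [neg_add_cancel]
        rcases smul_eq_zero.mp h2 with h | h
        · exact absurd h two_ne_zero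
        · exact h
      rw [hzero]
      exact Submodule.zero_mem _
  -- expand x
  have hx : x = x.coeff.sum (fun g c => MonoidAlgebra.single g c) := (MonoidAlgebra.sum_coeff_single x).symm
  rw [hx, Finsupp.sum]
  rw [Finset.mul_sum, Finset.sum_mul]
  refine Submodule.sum_mem _ fun g hg => ?_
  have : MonoidAlgebra.single g (x.coeff g) = x.coeff g • MonoidAlgebra.single g (1:F) := by
    rw [MonoidAlgebra.smul_single']
    rw [mul_one]
  rw [this, mul_smul_comm, smul_mul_assoc]
  exact Submodule.smul_mem _ _ (key g)

lemma exe_mem_span {row col : Fin n → ℕ} (hd : Dich row col)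
    (x : MonoidAlgebra F (Equiv.Perm (Fin n))) :
    youngSym F row col * x * youngSym F row col ∈
      Submodule.span F {youngSym F row col} := by
  have : youngSym F row col * x * youngSym F row col =
      symSum F (presGrp row) * (altSum F (presGrp col) * x * symSum F (presGrp row)) *
        altSum F (presGrp col) := by
    rw [youngSym_eq]
    noncomm_ring
  rw [this]
  exact axb_mem_span hd _

lemma exists_theta {row col : Fin n → ℕ} (hd : Dich row col)
    (hinj : Function.Injective fun j : Fin n => (row j, col j)) :
    ∃ θ : F, youngSym F row col * youngSym F row col = θ • youngSym F row col ∧ θ ≠ 0 := by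
  have h1 : youngSym F row col * youngSym F row col ∈
      Submodule.span F {youngSym F row col} := by
    have := exe_mem_span (F := F) hd (1 : MonoidAlgebra F (Equiv.Perm (Fin n)))
    simpa using this
  rcases Submodule.mem_span_singleton.mp h1 with ⟨θ, hθ⟩
  refine ⟨θ, hθ.symm, ?_⟩
  -- trace argument
  intro h0
  subst h0
  rw [zero_smul] at hθ
  set A := MonoidAlgebra F (Equiv.Perm (Fin n))
  haveI : Module.Finite F A :=
    Module.Finite.of_basis (MonoidAlgebra.basis (Equiv.Perm (Fin n)) F)
  haveI : Module.Free F A := Module.Free.of_basis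
    (MonoidAlgebra.basis (Equiv.Perm (Fin n)) F)
  set φ : A →ₗ[F] A := LinearMap.mulRight F (youngSym F row col) with hφ
  have hnil : IsNilpotent φ := by
    refine ⟨2, ?_⟩
    have : φ * φ = LinearMap.mulRight F (youngSym F row col * youngSym F row col) := by
      rw [LinearMap.mulRight_mul]; rfl
    rw [pow_two, this, ← hθ]
    ext z
    simp
  have htr0 : LinearMap.trace F A φ = 0 := by
    have := LinearMap.isNilpotent_trace_of_isNilpotent hnil
    rwa [isNilpotent_iff_eq_zero] at this
  have htr : LinearMap.trace F A φ = (Fintype.card (Equiv.Perm (Fin n)) : F) := by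
    rw [LinearMap.trace_eq_matrix_trace F
      (MonoidAlgebra.basis (Equiv.Perm (Fin n)) F)]
    rw [Matrix.trace]
    have hdiag : ∀ g : Equiv.Perm (Fin n),
        (LinearMap.toMatrix (MonoidAlgebra.basis (Equiv.Perm (Fin n)) F)
          (MonoidAlgebra.basis (Equiv.Perm (Fin n)) F) φ).diag g = 1 := by
      intro g
      rw [Matrix.diag_apply, LinearMap.toMatrix_apply]
      simp only [MonoidAlgebra.basis_apply]
      show (MonoidAlgebra.single g (1:F) * youngSym F row col).coeff g = 1
      rw [MonoidAlgebra.coeff_single_mul_apply]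
      rw [inv_mul_cancel]
      rw [youngSym_apply_one F row col hinj, one_mul]
    rw [Finset.sum_congr rfl fun g _ => hdiag g]
    simp [Finset.card_univ]
  rw [htr0] at htr
  have : (Fintype.card (Equiv.Perm (Fin n)) : F) ≠ 0 := by
    exact_mod_cast Nat.cast_ne_zero.mpr (Fintype.card_ne_zero)
  exact this htr.symm

end Core

section Assembly
variable {n : ℕ}

def colGrp (col : Fin n → ℕ) (Y : Finset (Fin n)) : Subgroup (Equiv.Perm (Fin n)) where
  carrier := {σ | (∀ j, col (σ j) = col j) ∧ ∀ j ∉ Y, σ j = j}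
  one_mem' := ⟨fun j => rfl, fun j _ => rfl⟩
  mul_mem' := by
    rintro σ τ ⟨hσ1, hσ2⟩ ⟨hτ1, hτ2⟩
    refine ⟨fun j => ?_, fun j hj => ?_⟩
    · rw [Equiv.Perm.mul_apply, hσ1, hτ1]
    · rw [Equiv.Perm.mul_apply, hτ2 j hj, hσ2 j hj]
  inv_mem' := by
    rintro σ ⟨hσ1, hσ2⟩
    refine ⟨fun j => ?_, fun j hj => ?_⟩
    · have := hσ1 (σ⁻¹ j); simpa using this.symm
    · have h := hσ2 j hj
      calc σ⁻¹ j = σ⁻¹ (σ j) := by rw [h]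
        _ = j := by simp

variable {F}

lemma perm_maps_to {s : Finset (Fin n)} {σ : Equiv.Perm (Fin n)}
    (hσ : ∀ j ∉ s, σ j = j) : ∀ j ∈ s, σ j ∈ s := by
  intro j hj
  by_contra hns
  have h1 : σ (σ j) = σ j := hσ _ hns
  have h2 : σ j = j := σ.injective h1
  exact hns (by rw [h2]; exact hj)

lemma assemble {row col : Fin n → ℕ} (hd : Dich row col)
    (hinj : Function.Injective fun j : Fin n => (row j, col j))
    {k' l' : ℕ} (Xs : Fin k' → Finset (Fin n)) (Ys : Fin l' → Finset (Fin n))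
    (hXrow : ∀ i, ∀ j ∈ Xs i, ∀ j' ∈ Xs i, row j = row j')
    (hYcol : ∀ i, ∀ j ∈ Ys i, ∀ j' ∈ Ys i, col j = col j')
    (hXY : ∀ i i', Disjoint (Xs i) (Ys i')) :
    ∃ u : MonoidAlgebra F (Equiv.Perm (Fin n)),
      (∀ (i : Fin k') (σ : Equiv.Perm (Fin n)),
        (∀ j : Fin n, j ∉ Xs i → σ j = j) →
        MonoidAlgebra.single σ (1 : F) * (u * youngSym F row col) =
          u * youngSym F row col) ∧
      (∀ (i : Fin l') (σ : Equiv.Perm (Fin n)),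
        (∀ j : Fin n, j ∉ Ys i → σ j = j) →
        MonoidAlgebra.single σ (1 : F) * (u * youngSym F row col) =
          (Equiv.Perm.sign σ : ℤ) • (u * youngSym F row col)) ∧
      (Set.range (fun y : MonoidAlgebra F (Equiv.Perm (Fin n)) =>
          y * (u * youngSym F row col)) =
        Set.range (fun y : MonoidAlgebra F (Equiv.Perm (Fin n)) =>
          y * youngSym F row col)) := by
  set e := youngSym F row col with he
  set Ybig : Finset (Fin n) := Finset.univ.filter (fun j => ∃ i, j ∈ Ys i) with hYbig
  set Cb := colGrp col Ybig with hCb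
  set u := altSum F Cb with hu
  have hYsub : ∀ i, ∀ j ∈ Ys i, j ∈ Ybig := by
    intro i j hj
    rw [hYbig, Finset.mem_filter]
    exact ⟨Finset.mem_univ _, i, hj⟩
  have hCbC : ∀ τ ∈ Cb, τ ∈ presGrp col := fun τ hτ => hτ.1
  -- e * single τ = sgn τ • e for τ ∈ presGrp col
  have he_single : ∀ τ ∈ presGrp col, e * MonoidAlgebra.single τ (1:F) =
      (Equiv.Perm.sign τ : ℤ) • e := by
    intro τ hτ
    rw [he, youngSym_eq, mul_assoc, altSum_mul_single hτ, mul_smul_comm]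
  -- single ρ * e = e for ρ ∈ presGrp row
  have hrow_single : ∀ ρ ∈ presGrp row, MonoidAlgebra.single ρ (1:F) * e = e := by
    intro ρ hρ
    rw [he, youngSym_eq, ← mul_assoc, single_mul_symSum hρ]
  refine ⟨u, ?_, ?_, ?_⟩
  · -- symmetry in the X's
    intro i σ hσsupp
    have hρ : σ ∈ presGrp row := by
      intro x
      by_cases hx : x ∈ Xs i
      · exact hXrow i _ (perm_maps_to hσsupp x hx) _ hx
      · rw [hσsupp x hx]
    have hdisj : ∀ τ : Cb, σ * (τ : Equiv.Perm (Fin n)) = (τ : Equiv.Perm (Fin n)) * σ := by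
      intro τ
      have : Equiv.Perm.Disjoint σ (τ : Equiv.Perm (Fin n)) := by
        intro x
        by_cases hx : x ∈ Xs i
        · right
          apply τ.2.2
          intro hmem
          rw [hYbig, Finset.mem_filter] at hmem
          rcases hmem.2 with ⟨i', hi'⟩
          exact (Finset.disjoint_left.mp (hXY i i') hx) hi'
        · left; exact hσsupp x hx
      exact this.commute
    have hcomm : MonoidAlgebra.single σ (1:F) * u = u * MonoidAlgebra.single σ (1:F) := by
      rw [hu, altSum, Finset.mul_sum, Finset.sum_mul]
      refine Finset.sum_congr rfl fun τ _ => ?_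
      simp only [mul_smul_comm, smul_mul_assoc, MonoidAlgebra.single_mul_single,
        one_mul, mul_one]
      rw [hdisj τ]
    rw [← mul_assoc, hcomm, mul_assoc, hrow_single σ hρ]
  · -- antisymmetry in the Y's
    intro i σ hσsupp
    have hτ : σ ∈ Cb := by
      refine ⟨fun x => ?_, fun x hx => ?_⟩
      · by_cases hx : x ∈ Ys i
        · exact hYcol i _ (perm_maps_to hσsupp x hx) _ hx
        · rw [hσsupp x hx]
      · exact hσsupp x (fun hmem => hx (hYsub i x hmem))
    rw [← mul_assoc, hu, single_mul_altSum hτ, smul_mul_assoc]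
  · -- range equality
    rcases exists_theta (F := F) hd hinj with ⟨θ, hθ, hθ0⟩
    set m : ℕ := Fintype.card Cb with hm
    have hmpos : 0 < (Fintype.card Cb) := Fintype.card_pos
    have hm0 : (m : F) ≠ 0 := by
      rw [hm]
      exact Nat.cast_ne_zero.mpr (Nat.pos_iff_ne_zero.mp hmpos)
    have heu : e * u = (m : F) • e := by
      rw [hu, altSum, Finset.mul_sum]
      have : ∀ τ : Cb, e * ((Equiv.Perm.sign (τ : Equiv.Perm (Fin n)) : ℤ) •
          MonoidAlgebra.single (τ : Equiv.Perm (Fin n)) (1:F)) = e := by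
        intro τ
        rw [mul_smul_comm, he_single _ (hCbC _ τ.2), smul_smul]
        rcases Int.units_eq_one_or (Equiv.Perm.sign (τ : Equiv.Perm (Fin n))) with h | h <;>
          simp [h]
      rw [Finset.sum_congr rfl (fun τ _ => this τ), Finset.sum_const, Finset.card_univ]
      rw [← hm, Nat.cast_smul_eq_nsmul]
    have hkey : e * (u * e) = ((m : F) * θ) • e := by
      rw [← mul_assoc, heu, smul_mul_assoc, hθ, smul_smul]
    ext z
    simp only [Set.mem_range]
    constructor
    · rintro ⟨y, rfl⟩
      exact ⟨y * u, by rw [mul_assoc]⟩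
    · rintro ⟨y, rfl⟩
      refine ⟨((m : F) * θ)⁻¹ • (y * e), ?_⟩
      have h1 : ((m : F) * θ)⁻¹ • (y * e) * (u * e) =
          ((m : F) * θ)⁻¹ • (y * (e * (u * e))) := by
        rw [smul_mul_assoc, mul_assoc]
      rw [h1, hkey, mul_smul_comm, smul_smul, inv_mul_cancel₀ (by
        exact mul_ne_zero hm0 hθ0), one_smul]

lemma dich_of {row col : Fin n → ℕ} {lam : ℕ → ℕ} (hmono : Antitone lam)
    (hsum : ∑ i ∈ Finset.range n, lam i = n)
    (hcol : ∀ j, col j < lam (row j))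
    (hinj : Function.Injective fun j : Fin n => (row j, col j)) :
    Dich row col := by
  intro π
  rcases dichotomy_raw hmono hsum hcol hinj π with ⟨ρ, τ, hρ, hτ, heq⟩ | h
  · exact Or.inl ⟨ρ, hρ, τ, hτ, heq⟩
  · exact Or.inr h

end Assembly


end
end Hook19

theorem stmt19 (n k l : ℕ) (lam : ℕ → ℕ) (hpart : Antitone lam)
    (hsum : ∑ i ∈ Finset.range n, lam i = n) (hhook : lam k ≤ l) :
    ∃ (k' l' : ℕ) (cX : Fin k' → ℕ) (cY : Fin l' → ℕ), k' ≤ k ∧ l' ≤ l ∧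
      ∀ row col : Fin n → ℕ, (∀ j : Fin n, col j < lam (row j)) →
        (Function.Injective fun j : Fin n => (row j, col j)) →
        ∃ (Xs : Fin k' → Finset (Fin n)) (Ys : Fin l' → Finset (Fin n))
          (u : MonoidAlgebra F (Equiv.Perm (Fin n))),
          (∀ i, (Xs i).card = cX i) ∧ (∀ i, (Ys i).card = cY i) ∧
          (∀ j : Fin n, ∃! s : Fin k' ⊕ Fin l', j ∈ Sum.elim Xs Ys s) ∧
          (∀ (i : Fin k') (σ : Equiv.Perm (Fin n)),
            (∀ j : Fin n, j ∉ Xs i → σ j = j) →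
            MonoidAlgebra.single σ (1 : F) * (u * youngSym F row col) =
              u * youngSym F row col) ∧
          (∀ (i : Fin l') (σ : Equiv.Perm (Fin n)),
            (∀ j : Fin n, j ∉ Ys i → σ j = j) →
            MonoidAlgebra.single σ (1 : F) * (u * youngSym F row col) =
              (Equiv.Perm.sign σ : ℤ) • (u * youngSym F row col)) ∧
          (Set.range (fun y : MonoidAlgebra F (Equiv.Perm (Fin n)) =>
              y * (u * youngSym F row col)) =
            Set.range (fun y : MonoidAlgebra F (Equiv.Perm (Fin n)) =>
              y * youngSym F row col)) := by
  classical
  by_cases hzero : lam n = 0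
  · -- Case A: the boxes fill the Young diagram of lam
    refine ⟨k, l, (fun i => lam i),
      (fun c => ((Finset.range n).filter (fun r => k ≤ r ∧ (c:ℕ) < lam r)).card),
      le_refl k, le_refl l, ?_⟩
    intro row col hcol hinj
    set Xs : Fin k → Finset (Fin n) :=
      fun i => Finset.univ.filter (fun j => row j = (i:ℕ)) with hXs
    set Ys : Fin l → Finset (Fin n) :=
      fun c => Finset.univ.filter (fun j => col j = (c:ℕ) ∧ k ≤ row j) with hYs
    have hd : Dich row col := dich_of hpart hsum hcol hinj
    obtain ⟨u, hsym, halt, hrange⟩ := assemble (F := F) hd hinj Xs Ys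
      (by
        intro i j hj j' hj'
        rw [hXs] at hj hj'
        simp only [Finset.mem_filter] at hj hj'
        rw [hj.2, hj'.2])
      (by
        intro i j hj j' hj'
        rw [hYs] at hj hj'
        simp only [Finset.mem_filter] at hj hj'
        rw [hj.2.1, hj'.2.1])
      (by
        intro i c
        rw [Finset.disjoint_left]
        intro j hj hj'
        rw [hXs] at hj; rw [hYs] at hj'
        simp only [Finset.mem_filter] at hj hj'
        have h1 : (i:ℕ) < k := i.2
        omega)
    refine ⟨Xs, Ys, u, ?_, ?_, ?_, hsym, halt, hrange⟩
    · intro i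
      exact row_fiber_card hpart hsum hzero hcol hinj (i:ℕ)
    · intro c
      exact trunc_fiber_card hpart hsum hzero hcol hinj k (c:ℕ)
    · intro j
      have hcolLT : k ≤ row j → col j < l := fun hkj =>
        lt_of_lt_of_le (hcol j) (le_trans (hpart hkj) hhook)
      by_cases hr : row j < k
      · refine ⟨Sum.inl ⟨row j, hr⟩, ?_, ?_⟩
        · show j ∈ Xs _
          rw [hXs]
          simp
        · rintro (i | c) hs
          · have h1 : row j = (i:ℕ) := by
              have := hs
              rw [Sum.elim_inl, hXs] at this
              simpa using this
            have : i = (⟨row j, hr⟩ : Fin k) := by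
              apply Fin.ext
              exact h1.symm
            rw [this]
          · exfalso
            have := hs
            rw [Sum.elim_inr, hYs] at this
            simp only [Finset.mem_filter] at this
            omega
      · push_neg at hr
        refine ⟨Sum.inr ⟨col j, hcolLT hr⟩, ?_, ?_⟩
        · show j ∈ Ys _
          rw [hYs]
          simp [hr]
        · rintro (i | c) hs
          · exfalso
            have := hs
            rw [Sum.elim_inl, hXs] at this
            simp only [Finset.mem_filter] at this
            have h1 : (i:ℕ) < k := i.2
            omega
          · have h1 : col j = (c:ℕ) := by
              have := hs
              rw [Sum.elim_inr, hYs] at this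
              simp only [Finset.mem_filter] at this
              exact this.2.1
            have : c = (⟨col j, hcolLT hr⟩ : Fin l) := by
              apply Fin.ext
              exact h1.symm
            rw [this]
  · -- Case B : single-column-like shapes
    by_cases hl : l = 0
    · -- no alternating sets allowed: use singletons as rows
      have hnk : n ≤ k := by
        by_contra h
        push_neg at h
        have h2 : lam n ≤ lam k := hpart (le_of_lt h)
        omega
      refine ⟨n, 0, (fun _ => 1), (fun c => c.elim0), hnk, Nat.zero_le _, ?_⟩
      intro row col hcol hinj
      set Xs : Fin n → Finset (Fin n) := fun i => {i} with hXs
      set Ys : Fin 0 → Finset (Fin n) := fun c => c.elim0 with hYs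
      have hd : Dich row col := dich_of hpart hsum hcol hinj
      obtain ⟨u, hsym, halt, hrange⟩ := assemble (F := F) hd hinj Xs Ys
        (by
          intro i j hj j' hj'
          rw [hXs] at hj hj'
          simp only [Finset.mem_singleton] at hj hj'
          rw [hj, hj'])
        (fun i => i.elim0)
        (fun i c => c.elim0)
      refine ⟨Xs, Ys, u, ?_, fun c => c.elim0, ?_, hsym, halt, hrange⟩
      · intro i
        rw [hXs]
        simp
      · intro j
        refine ⟨Sum.inl j, ?_, ?_⟩
        · show j ∈ Xs j
          rw [hXs]
          simp
        · rintro (i | c) hs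
          · have : j ∈ Xs i := hs
            rw [hXs] at this
            simp only [Finset.mem_singleton] at this
            rw [this]
          · exact c.elim0
    · -- one alternating set: everything
      have hl1 : 1 ≤ l := by omega
      refine ⟨0, 1, (fun i => i.elim0), (fun _ => n), Nat.zero_le _, hl1, ?_⟩
      intro row col hcol hinj
      have hcol0 : ∀ j : Fin n, col j = 0 :=
        col_eq_zero_of_lam_pos hpart hsum hzero hcol
      set Xs : Fin 0 → Finset (Fin n) := fun i => i.elim0 with hXs
      set Ys : Fin 1 → Finset (Fin n) := fun _ => Finset.univ with hYs
      have hd : Dich row col := dich_of hpart hsum hcol hinj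
      obtain ⟨u, hsym, halt, hrange⟩ := assemble (F := F) hd hinj Xs Ys
        (fun i => i.elim0)
        (by
          intro i j _ j' _
          rw [hcol0, hcol0])
        (fun i => i.elim0)
      refine ⟨Xs, Ys, u, fun i => i.elim0, ?_, ?_, hsym, halt, hrange⟩
      · intro c
        rw [hYs]
        simp
      · intro j
        refine ⟨Sum.inr 0, ?_, ?_⟩
        · show j ∈ Ys 0
          rw [hYs]
          simp
        · rintro (i | c) hs
          · exact i.elim0
          · have : c = 0 := Subsingleton.elim _ _
            rw [this]
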